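/- Let R be a commutative ℚ-algebra, k ≥ 1 an integer, t_1, …, t_k ∈ R parameters and ω_1, …, ω_k ∈ R weights. Define the weighted isobaric sequence P_{ω,0} = 1 and, for n ≥ 1, P_{ω,n} = ∑_α (multinomial coefficient (α_1 + ⋯ + α_k)! / (α_1! ⋯ α_k!)) · ((∑_{j=1}^k α_j ω_j) / (∑_{j=1}^k α_j)) · t_1^{α_1} ⋯ t_k^{α_k}, where the sum runs over all tuples α = (α_1, …, α_k) of natural numbers with ∑_{j=1}^k j·α_j = n (the partitions of n with parts at most k), and division by the natural number ∑ α_j is scalar division in the ℚ-algebra R. Then in R⟦y⟧ one has (1 − (t_1 y + ⋯ + t_k y^k)) · (∑_{n≥0} P_{ω,n} y^n) = 1 + ∑_{j=1}^k (ω_j − 1) t_j y^j; equivalently, ∑_{n≥0} P_{ω,n} y^n = 1 + (ω_1 t_1 y + ⋯ + ω_k t_k y^k)/(1 − P(y)) with P(y) = t_1 y + ⋯ + t_k y^k. -/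

import Mathlib

open Finset PowerSeries

/-- The index set: partitions of `n` with parts at most `k`, as exponent tuples. -/
private def wipS (k n : ℕ) : Finset (Fin k → ℕ) :=
  Finset.filter (fun α : Fin k → ℕ => ∑ j : Fin k, ((j : ℕ) + 1) * α j = n)
    (Fintype.piFinset fun _ : Fin k => Finset.range (n + 1))

private lemma mem_wipS {k n : ℕ} {α : Fin k → ℕ} :
    α ∈ wipS k n ↔ ∑ j : Fin k, ((j : ℕ) + 1) * α j = n := by
  simp only [wipS, Finset.mem_filter, Fintype.mem_piFinset, Finset.mem_range]
  refine ⟨fun h => h.2, fun h => ⟨fun i => ?_, h⟩⟩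
  have h1 : ((i : ℕ) + 1) * α i ≤ n := h ▸
    Finset.single_le_sum (f := fun j : Fin k => ((j : ℕ) + 1) * α j)
      (fun _ _ => Nat.zero_le _) (Finset.mem_univ i)
  have h2 : α i ≤ ((i : ℕ) + 1) * α i := Nat.le_mul_of_pos_left _ (Nat.succ_pos _)
  omega

/-- The "complete homogeneous" series coefficients `h_n = ∑ multinomial(α) t^α`. -/
private noncomputable def wipH {R : Type*} [CommRing R] (k : ℕ) (t : Fin k → R) (n : ℕ) : R :=
  ∑ α ∈ wipS k n, (Nat.multinomial Finset.univ α : R) * ∏ j, t j ^ α j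

private lemma wipS_zero (k : ℕ) : wipS k 0 = {fun _ => 0} := by
  ext α
  simp only [mem_wipS, Finset.mem_singleton]
  constructor
  · intro h
    funext i
    have := (Finset.sum_eq_zero_iff.mp h) i (Finset.mem_univ i)
    rcases Nat.mul_eq_zero.mp this with h' | h'
    · omega
    · exact h'
  · intro h; subst h; simp

private lemma wipH_zero {R : Type*} [CommRing R] (k : ℕ) (t : Fin k → R) :
    wipH k t 0 = 1 := by
  simp [wipH, wipS_zero, Nat.multinomial]

private lemma wip_mult_mul {k : ℕ} (α : Fin k → ℕ) (j : Fin k) (hj : 1 ≤ α j) :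
    Nat.multinomial Finset.univ α * α j =
      Nat.multinomial Finset.univ (Function.update α j (α j - 1)) * ∑ i, α i := by
  set β := Function.update α j (α j - 1) with hβ
  have hβj : β j = α j - 1 := by rw [hβ, Function.update_self]
  have hβi : ∀ i, i ≠ j → β i = α i := fun i hi => by rw [hβ, Function.update_of_ne hi]
  have herase : ∑ i ∈ Finset.univ.erase j, β i = ∑ i ∈ Finset.univ.erase j, α i :=
    Finset.sum_congr rfl fun i hi => hβi i (Finset.ne_of_mem_erase hi)
  have hsum : ∑ i, α i = (∑ i, β i) + 1 := by
    rw [← Finset.add_sum_erase _ α (Finset.mem_univ j),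
        ← Finset.add_sum_erase _ β (Finset.mem_univ j), hβj, herase]
    omega
  have hprod : ∏ i, (α i).factorial = α j * ∏ i, (β i).factorial := by
    rw [← Finset.mul_prod_erase _ _ (Finset.mem_univ j),
        ← Finset.mul_prod_erase _ (fun i => (β i).factorial) (Finset.mem_univ j), hβj]
    have herase2 : ∏ i ∈ Finset.univ.erase j, (β i).factorial =
        ∏ i ∈ Finset.univ.erase j, (α i).factorial :=
      Finset.prod_congr rfl fun i hi =>
        congrArg Nat.factorial (hβi i (Finset.ne_of_mem_erase hi))
    rw [herase2, ← mul_assoc]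
    congr 1
    conv_lhs => rw [show α j = (α j - 1) + 1 from by omega]
    rw [Nat.factorial_succ]
    congr 1
    omega
  have h1 := Nat.multinomial_spec Finset.univ α
  have h2 := Nat.multinomial_spec Finset.univ β
  have hpos : 0 < ∏ i, (α i).factorial :=
    Finset.prod_pos fun i _ => (α i).factorial_pos
  apply Nat.eq_of_mul_eq_mul_left hpos
  calc (∏ i, (α i).factorial) * (Nat.multinomial Finset.univ α * α j)
      = ((∏ i, (α i).factorial) * Nat.multinomial Finset.univ α) * α j := by ring
    _ = (∑ i, α i).factorial * α j := by rw [h1]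
    _ = ((∑ i, β i) + 1).factorial * α j := by rw [hsum]
    _ = (((∑ i, β i) + 1) * (∑ i, β i).factorial) * α j := by rw [Nat.factorial_succ]
    _ = α j * ((∏ i, (β i).factorial) * Nat.multinomial Finset.univ β) * ((∑ i, β i) + 1) := by
        rw [h2]; ring
    _ = (α j * ∏ i, (β i).factorial) * (Nat.multinomial Finset.univ β * ∑ i, α i) := by
        rw [hsum]; ring
    _ = (∏ i, (α i).factorial) * (Nat.multinomial Finset.univ β * ∑ i, α i) := by
        rw [hprod]

private lemma wip_key {R : Type*} [CommRing R] [Algebra ℚ R] {k : ℕ} (t ω : Fin k → R)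
    {n : ℕ} (hn : 1 ≤ n) :
    (∑ α ∈ wipS k n,
        (Nat.multinomial Finset.univ α : R) *
          ((((∑ j, α j : ℕ) : ℚ))⁻¹ • (∑ j, (α j : ℕ) • ω j)) * ∏ j, t j ^ α j)
      = ∑ j : Fin k,
          if (j : ℕ) + 1 ≤ n then ω j * t j * wipH k t (n - ((j : ℕ) + 1)) else 0 := by
  have step1 : ∀ α : Fin k → ℕ,
      (Nat.multinomial Finset.univ α : R) *
          ((((∑ j, α j : ℕ) : ℚ))⁻¹ • (∑ j, (α j : ℕ) • ω j)) * ∏ j, t j ^ α j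
        = ∑ j : Fin k, (Nat.multinomial Finset.univ α : R) *
            ((((∑ i, α i : ℕ) : ℚ))⁻¹ • ((α j : ℕ) • ω j)) * ∏ i, t i ^ α i := by
    intro α
    rw [Finset.smul_sum, Finset.mul_sum, Finset.sum_mul]
  rw [Finset.sum_congr rfl fun α _ => step1 α, Finset.sum_comm]
  refine Finset.sum_congr rfl fun j _ => ?_
  by_cases hjn : (j : ℕ) + 1 ≤ n
  · rw [if_pos hjn]
    -- drop terms with α j = 0
    rw [← Finset.sum_filter_of_ne (p := fun α : Fin k → ℕ => 1 ≤ α j) ?hzero]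
    case hzero =>
      intro α _ hne
      by_contra h0
      have hαj : α j = 0 := by omega
      apply hne
      simp [hαj]
    -- now the bijection with wipS k (n - (j+1))
    rw [wipH, Finset.mul_sum]
    refine Finset.sum_nbij' (fun α => Function.update α j (α j - 1))
      (fun β => Function.update β j (β j + 1)) ?_ ?_ ?_ ?_ ?_
    · intro α hα
      rw [Finset.mem_filter] at hα
      obtain ⟨hαS, hαj⟩ := hα
      rw [mem_wipS] at hαS ⊢
      rw [← Finset.add_sum_erase _ _ (Finset.mem_univ j)] at hαS ⊢
      rw [Function.update_self]
      have herase : ∑ i ∈ Finset.univ.erase j,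
            ((i : ℕ) + 1) * Function.update α j (α j - 1) i
          = ∑ i ∈ Finset.univ.erase j, ((i : ℕ) + 1) * α i :=
        Finset.sum_congr rfl fun i hi => by
          rw [Function.update_of_ne (Finset.ne_of_mem_erase hi)]
      rw [herase]
      have hmul : ((j : ℕ) + 1) * (α j - 1) + ((j : ℕ) + 1) = ((j : ℕ) + 1) * α j := by
        rw [← Nat.mul_succ]; congr 1; omega
      have hge : ((j : ℕ) + 1) ≤ ((j : ℕ) + 1) * α j := Nat.le_mul_of_pos_right _ (by omega)
      omega
    · intro β hβ
      rw [Finset.mem_filter]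
      rw [mem_wipS] at hβ
      constructor
      · rw [mem_wipS]
        rw [← Finset.add_sum_erase _ _ (Finset.mem_univ j)] at hβ ⊢
        rw [Function.update_self]
        have herase : ∑ i ∈ Finset.univ.erase j,
              ((i : ℕ) + 1) * Function.update β j (β j + 1) i
            = ∑ i ∈ Finset.univ.erase j, ((i : ℕ) + 1) * β i :=
          Finset.sum_congr rfl fun i hi => by
            rw [Function.update_of_ne (Finset.ne_of_mem_erase hi)]
        rw [herase]
        have hmul : ((j : ℕ) + 1) * (β j + 1) = ((j : ℕ) + 1) * β j + ((j : ℕ) + 1) :=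
          Nat.mul_succ _ _
        omega
      · rw [Function.update_self]
        omega
    · intro α hα
      rw [Finset.mem_filter] at hα
      funext i
      rcases eq_or_ne i j with rfl | hi
      · simp only [Function.update_self]
        omega
      · simp only [Function.update_of_ne hi]
    · intro β hβ
      funext i
      rcases eq_or_ne i j with rfl | hi
      · simp only [Function.update_self]
        omega
      · simp only [Function.update_of_ne hi]
    · intro α hα
      rw [Finset.mem_filter] at hα
      obtain ⟨hαS, hαj⟩ := hα
      rw [mem_wipS] at hαS
      set β := Function.update α j (α j - 1) with hβdef
      have hmpos : 1 ≤ ∑ i, α i := by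
        have : α j ≤ ∑ i, α i :=
          Finset.single_le_sum (fun _ _ => Nat.zero_le _) (Finset.mem_univ j)
        omega
      have hmQ : ((∑ i, α i : ℕ) : ℚ) ≠ 0 := Nat.cast_ne_zero.mpr (by omega)
      -- scalar identity in ℚ
      have hnat := wip_mult_mul α j hαj
      have hcast : (Nat.multinomial Finset.univ α : ℚ) * ((α j : ℕ) : ℚ) =
          (Nat.multinomial Finset.univ β : ℚ) * ((∑ i, α i : ℕ) : ℚ) := by
        exact_mod_cast congrArg (Nat.cast : ℕ → ℚ) hnat
      have hq : (Nat.multinomial Finset.univ α : ℚ) *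
            ((((∑ i, α i : ℕ) : ℚ))⁻¹ * ((α j : ℕ) : ℚ)) =
          (Nat.multinomial Finset.univ β : ℚ) := by
        rw [mul_comm ((((∑ i, α i : ℕ) : ℚ))⁻¹) (((α j : ℕ) : ℚ)), ← mul_assoc, hcast,
          mul_assoc, mul_inv_cancel₀ hmQ, mul_one]
      -- product identity
      have hprod : ∏ i, t i ^ α i = t j * ∏ i, t i ^ β i := by
        rw [← Finset.mul_prod_erase _ (fun i => t i ^ α i) (Finset.mem_univ j),
            ← Finset.mul_prod_erase _ (fun i => t i ^ β i) (Finset.mem_univ j)]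
        have herase : ∏ i ∈ Finset.univ.erase j, t i ^ β i
            = ∏ i ∈ Finset.univ.erase j, t i ^ α i :=
          Finset.prod_congr rfl fun i hi => by
            rw [hβdef, Function.update_of_ne (Finset.ne_of_mem_erase hi)]
        rw [herase, hβdef, Function.update_self, ← mul_assoc]
        congr 1
        conv_lhs => rw [show α j = (α j - 1) + 1 by omega]
        rw [pow_succ]
        ring
      -- assemble
      calc (Nat.multinomial Finset.univ α : R) *
            ((((∑ i, α i : ℕ) : ℚ))⁻¹ • ((α j : ℕ) • ω j)) * ∏ i, t i ^ α i
          = (((Nat.multinomial Finset.univ α : ℚ)) • (1 : R)) *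
            (((((∑ i, α i : ℕ) : ℚ))⁻¹ * ((α j : ℕ) : ℚ)) • ω j) * ∏ i, t i ^ α i := by
            rw [← Nat.cast_smul_eq_nsmul ℚ (α j) (ω j), smul_smul,
              Nat.cast_smul_eq_nsmul ℚ (Nat.multinomial Finset.univ α) (1 : R),
              nsmul_eq_mul, mul_one]
        _ = (((Nat.multinomial Finset.univ α : ℚ) *
              ((((∑ i, α i : ℕ) : ℚ))⁻¹ * ((α j : ℕ) : ℚ))) • ((1 : R) * ω j))
              * ∏ i, t i ^ α i := by
            rw [smul_mul_smul_comm]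
        _ = ((Nat.multinomial Finset.univ β : ℚ) • ω j) * ∏ i, t i ^ α i := by
            rw [hq, one_mul]
        _ = ((Nat.multinomial Finset.univ β : R) * ω j) * ∏ i, t i ^ α i := by
            rw [Nat.cast_smul_eq_nsmul ℚ, nsmul_eq_mul]
        _ = ω j * t j * ((Nat.multinomial Finset.univ β : R) * ∏ i, t i ^ β i) := by
            rw [hprod]; ring
  · rw [if_neg hjn]
    apply Finset.sum_eq_zero
    intro α hα
    rw [mem_wipS] at hα
    have hle : ((j : ℕ) + 1) * α j ≤ n := hα ▸
      Finset.single_le_sum (f := fun i : Fin k => ((i : ℕ) + 1) * α i)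
        (fun _ _ => Nat.zero_le _) (Finset.mem_univ j)
    have hαj : α j = 0 := by
      rcases Nat.eq_zero_or_pos (α j) with h0 | h0
      · exact h0
      · exfalso
        have := Nat.le_mul_of_pos_right ((j : ℕ) + 1) h0
        omega
    simp [hαj]

private lemma wipH_rec {R : Type*} [CommRing R] [Algebra ℚ R] {k : ℕ} (t : Fin k → R)
    {n : ℕ} (hn : 1 ≤ n) :
    wipH k t n = ∑ j : Fin k,
      if (j : ℕ) + 1 ≤ n then t j * wipH k t (n - ((j : ℕ) + 1)) else 0 := by
  have key := wip_key t (fun _ => (1 : R)) hn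
  have lhs_eq : (∑ α ∈ wipS k n,
      (Nat.multinomial Finset.univ α : R) *
        ((((∑ j, α j : ℕ) : ℚ))⁻¹ • (∑ j, (α j : ℕ) • (1 : R))) * ∏ j, t j ^ α j)
      = wipH k t n := by
    rw [wipH]
    refine Finset.sum_congr rfl fun α hα => ?_
    rw [mem_wipS] at hα
    have hmpos : 1 ≤ ∑ i, α i := by
      by_contra h0
      have hall : ∀ i, α i = 0 := by
        intro i
        have : ∑ i, α i = 0 := by omega
        have := (Finset.sum_eq_zero_iff.mp this) i (Finset.mem_univ i)
        omega
      have : ∑ j : Fin k, ((j : ℕ) + 1) * α j = 0 :=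
        Finset.sum_eq_zero fun i _ => by rw [hall i, Nat.mul_zero]
      omega
    have h1 : (∑ j, (α j : ℕ) • (1 : R)) = ((∑ j, α j : ℕ) : R) := by
      rw [Nat.cast_sum]
      exact Finset.sum_congr rfl fun j _ => by rw [nsmul_eq_mul, mul_one]
    rw [h1]
    have h2 : ((((∑ j, α j : ℕ) : ℚ))⁻¹ • (((∑ j, α j : ℕ) : R))) = 1 := by
      rw [show (((∑ j, α j : ℕ) : R)) = ((∑ j, α j : ℕ) : ℚ) • (1 : R) by
        rw [Nat.cast_smul_eq_nsmul ℚ, nsmul_eq_mul, mul_one]]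
      rw [smul_smul, inv_mul_cancel₀ (Nat.cast_ne_zero.mpr (by omega)), one_smul]
    rw [h2, mul_one]
  rw [← lhs_eq, key]
  exact Finset.sum_congr rfl fun j _ => by split <;> simp

theorem wip_generating_function {R : Type*} [CommRing R] [Algebra ℚ R]
    (k : ℕ) (hk : 1 ≤ k) (t ω : Fin k → R) (P : ℕ → R) (hP0 : P 0 = 1)
    (hP : ∀ n, 1 ≤ n →
      P n = ∑ α ∈ Finset.filter (fun α : Fin k → ℕ => ∑ j : Fin k, ((j : ℕ) + 1) * α j = n)
              (Fintype.piFinset fun _ : Fin k => Finset.range (n + 1)),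
        (Nat.multinomial Finset.univ α : R) *
          ((((∑ j, α j : ℕ) : ℚ))⁻¹ • (∑ j, (α j : ℕ) • ω j)) *
          ∏ j, t j ^ α j) :
    (1 - ∑ j : Fin k, PowerSeries.C (t j) * PowerSeries.X ^ ((j : ℕ) + 1)) *
      PowerSeries.mk P =
    1 + ∑ j : Fin k, PowerSeries.C ((ω j - 1) * t j) *
      PowerSeries.X ^ ((j : ℕ) + 1) := by
  set Q : PowerSeries R := ∑ j : Fin k, PowerSeries.C (t j) * PowerSeries.X ^ ((j : ℕ) + 1)
    with hQ
  set A : PowerSeries R := ∑ j : Fin k, PowerSeries.C (ω j * t j) * PowerSeries.X ^ ((j : ℕ) + 1)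
    with hA
  set H : PowerSeries R := PowerSeries.mk (wipH k t) with hH
  -- coefficient of a sum-of-C-X-powers times a series
  have coeff_mul_gen : ∀ (a : Fin k → R) (f : ℕ → R) (n : ℕ),
      (PowerSeries.coeff n) ((∑ j : Fin k, PowerSeries.C (a j) *
          PowerSeries.X ^ ((j : ℕ) + 1)) * PowerSeries.mk f)
        = ∑ j : Fin k, if (j : ℕ) + 1 ≤ n then a j * f (n - ((j : ℕ) + 1)) else 0 := by
    intro a f n
    rw [Finset.sum_mul, map_sum]
    refine Finset.sum_congr rfl fun j _ => ?_
    rw [show PowerSeries.C (a j) * PowerSeries.X ^ ((j : ℕ) + 1) * PowerSeries.mk f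
        = PowerSeries.C (a j) * (PowerSeries.mk f * PowerSeries.X ^ ((j : ℕ) + 1)) by ring]
    rw [PowerSeries.coeff_C_mul, PowerSeries.coeff_mul_X_pow']
    split <;> simp [PowerSeries.coeff_mk]
  have hQH : (1 - Q) * H = 1 := by
    ext n
    rw [sub_mul, one_mul, map_sub, hQ, hH, coeff_mul_gen t (wipH k t) n]
    rcases Nat.eq_zero_or_pos n with rfl | hn
    · simp [PowerSeries.coeff_mk, wipH_zero, PowerSeries.coeff_one]
    · rw [PowerSeries.coeff_mk, PowerSeries.coeff_one, if_neg (by omega)]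
      rw [wipH_rec t hn]
      ring
  have hPH : PowerSeries.mk P = 1 + A * H := by
    ext n
    rw [map_add, hA, hH, coeff_mul_gen (fun j => ω j * t j) (wipH k t) n]
    rcases Nat.eq_zero_or_pos n with rfl | hn
    · simp [PowerSeries.coeff_mk, hP0, PowerSeries.coeff_one]
    · rw [PowerSeries.coeff_mk, PowerSeries.coeff_one, if_neg (by omega), hP n hn]
      rw [show (Finset.filter (fun α : Fin k → ℕ => ∑ j : Fin k, ((j : ℕ) + 1) * α j = n)
              (Fintype.piFinset fun _ : Fin k => Finset.range (n + 1))) = wipS k n from rfl]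
      rw [wip_key t ω hn]
      rw [zero_add]
  rw [hPH]
  have hAQ : ∑ j : Fin k, PowerSeries.C ((ω j - 1) * t j) * PowerSeries.X ^ ((j : ℕ) + 1)
      = A - Q := by
    rw [hA, hQ, ← Finset.sum_sub_distrib]
    refine Finset.sum_congr rfl fun j _ => ?_
    rw [← sub_mul, ← map_sub]
    congr 2
    ring
  rw [hAQ]
  calc (1 - Q) * (1 + A * H) = (1 - Q) + A * ((1 - Q) * H) := by ring
    _ = (1 - Q) + A * 1 := by rw [hQH]
    _ = 1 + (A - Q) := by ring
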